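/- Let a, b ∈ ℝ^d with aⱼ ≤ bⱼ for all j, and let I = {x ∈ ℝ^d : aⱼ ≤ xⱼ ≤ bⱼ for all j} be the corresponding hyperrectangle with corner set C = {x ∈ ℝ^d : for each j, xⱼ = aⱼ or xⱼ = bⱼ}. Let V be a finite set of points with C ⊆ V ⊆ I, suppose I = ⋃_{k ∈ K} S_k where each S_k is the convex hull of an affinely independent family of points of V, let f : ℝ^d → ℝ, and suppose σ ≥ 0 is such that for every k the linear interpolant f_lᵏ of f on S_k satisfies |f(s) − f_lᵏ(s)| ≤ σ on S_k. Suppose the affine maps f_u, f_b and the real number θ satisfy the linear-program constraints: f_u(v) ≥ f(v) and f_b(v) ≤ f(v) for all v ∈ V, and f_u(c) − f_b(c) ≤ θ for all c ∈ C. Then the affine maps f̄ := f_u + σ and f̲ := f_b − σ satisfy f̲(x) ≤ f(x) ≤ f̄(x) and f̄(x) − f̲(x) ≤ θ + 2σ for all x ∈ I. -/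

import Mathlib

/-- Correctness content of the paper's Theorem 1 (scalar component): on a hyperrectangle
`I = [a, b]` triangulated by simplices with vertices among the grid points `V` (which
include all corners `C` of `I`), any feasible point `(fu, fb, θ)` of the LP — i.e.
`fu(v) ≥ f(v)`, `fb(v) ≤ f(v)` for all grid points `v ∈ V` and `fu(c) − fb(c) ≤ θ` at
all corners `c ∈ C` — yields affine maps `f̄ = fu + σ` and `f̲ = fb − σ` bracketing `f`
on `I` with gap at most `θ + 2σ`, where `σ` bounds the interpolation error on each
mesh element. -/
theorem lp_feasible_point_gives_abstraction
    (d : ℕ) (a b : Fin d → ℝ) (hab : ∀ j, a j ≤ b j)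
    (I C : Set (EuclideanSpace ℝ (Fin d)))
    (hI : I = {x : EuclideanSpace ℝ (Fin d) | ∀ j, a j ≤ x j ∧ x j ≤ b j})
    (hC : C = {x : EuclideanSpace ℝ (Fin d) | ∀ j, x j = a j ∨ x j = b j})
    (V : Finset (EuclideanSpace ℝ (Fin d)))
    (hCV : C ⊆ (V : Set (EuclideanSpace ℝ (Fin d))))
    (hVI : (V : Set (EuclideanSpace ℝ (Fin d))) ⊆ I)
    (K : Type*) (S : K → Set (EuclideanSpace ℝ (Fin d)))
    (v : K → Fin (d + 1) → EuclideanSpace ℝ (Fin d))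
    (hvind : ∀ k, AffineIndependent ℝ (v k))
    (hvV : ∀ k i, v k i ∈ V)
    (hS : ∀ k, S k = convexHull ℝ (Set.range (v k)))
    (hIu : I = ⋃ k, S k)
    (f : EuclideanSpace ℝ (Fin d) → ℝ)
    (σ : ℝ) (hσ : 0 ≤ σ)
    (fl : K → EuclideanSpace ℝ (Fin d) →ᵃ[ℝ] ℝ)
    (hfl : ∀ k i, fl k (v k i) = f (v k i))
    (herr : ∀ k, ∀ s ∈ S k, |f s - fl k s| ≤ σ)
    (fu fb : EuclideanSpace ℝ (Fin d) →ᵃ[ℝ] ℝ) (θ : ℝ)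
    (hfu : ∀ x ∈ V, fu x ≥ f x)
    (hfb : ∀ x ∈ V, fb x ≤ f x)
    (hθ : ∀ c ∈ C, fu c - fb c ≤ θ) :
    ∀ x ∈ I, (fb x - σ ≤ f x ∧ f x ≤ fu x + σ) ∧
      (fu x + σ) - (fb x - σ) ≤ θ + 2 * σ := by
  intro x hx
  -- first: I ⊆ convexHull ℝ C
  have hxC : x ∈ convexHull ℝ C := by
    rw [hC]
    have : ({x : EuclideanSpace ℝ (Fin d) | ∀ j, x j = a j ∨ x j = b j})
        = (WithLp.linearEquiv 2 ℝ (Fin d → ℝ)).symm.toLinearMap '' Set.pi Set.univ (fun j => ({a j, b j} : Set ℝ)) := by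
      ext y
      constructor
      · intro h
        refine ⟨WithLp.ofLp y, fun j _ => ?_, rfl⟩
        rcases h j with e | e <;> simp [e]
      · rintro ⟨z, h, rfl⟩ j
        have := h j (Set.mem_univ j)
        simpa using this
    rw [this, ← LinearMap.image_convexHull]
    have hx' : ∀ j ∈ (Set.univ : Set (Fin d)), WithLp.ofLp x j ∈ convexHull ℝ ({a j, b j} : Set ℝ) := by
      intro j _
      rw [convexHull_pair, segment_eq_Icc (hab j)]
      rw [hI] at hx
      exact ⟨(hx j).1, (hx j).2⟩
    exact ⟨_, mem_convexHull_pi hx', rfl⟩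
  -- gap bound on I
  have hgap : fu x - fb x ≤ θ := by
    have hconv : Convex ℝ {y : EuclideanSpace ℝ (Fin d) | fu y - fb y ≤ θ} := by
      have : {y : EuclideanSpace ℝ (Fin d) | fu y - fb y ≤ θ}
          = (fu - fb) ⁻¹' Set.Iic θ := rfl
      rw [this]
      exact (convex_Iic θ).affine_preimage (fu - fb)
    have := convexHull_min (s := C) (fun c hc => hθ c hc) hconv hxC
    exact this
  -- find simplex containing x
  rw [hIu] at hx
  obtain ⟨k, hk⟩ := Set.mem_iUnion.1 hx
  have hxk := hk
  rw [hS k] at hk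
  -- fl k ≤ fu on S k
  have h1 : fl k x ≤ fu x := by
    have hconv : Convex ℝ {y : EuclideanSpace ℝ (Fin d) | fl k y ≤ fu y} := by
      have : {y : EuclideanSpace ℝ (Fin d) | fl k y ≤ fu y}
          = (fu - fl k) ⁻¹' Set.Ici 0 := by
        ext y; simp [sub_nonneg]
      rw [this]
      exact (convex_Ici (0:ℝ)).affine_preimage (fu - fl k)
    refine convexHull_min ?_ hconv hk
    rintro _ ⟨i, rfl⟩
    have := hfu _ (hvV k i)
    simpa [hfl k i] using le_trans (le_of_eq (hfl k i)) this
  have h2 : fb x ≤ fl k x := by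
    have hconv : Convex ℝ {y : EuclideanSpace ℝ (Fin d) | fb y ≤ fl k y} := by
      have : {y : EuclideanSpace ℝ (Fin d) | fb y ≤ fl k y}
          = (fl k - fb) ⁻¹' Set.Ici 0 := by
        ext y; simp [sub_nonneg]
      rw [this]
      exact (convex_Ici (0:ℝ)).affine_preimage (fl k - fb)
    refine convexHull_min ?_ hconv hk
    rintro _ ⟨i, rfl⟩
    have := hfb _ (hvV k i)
    exact le_trans this (le_of_eq (hfl k i).symm)
  have herr' := abs_le.1 (herr k x hxk)
  refine ⟨⟨?_, ?_⟩, ?_⟩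
  · linarith [herr'.1, herr'.2]
  · linarith [herr'.1, herr'.2]
  · linarith
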